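/- Let n ≥ 2 and let W ⊆ ℂ^{n+2} be a 4-dimensional complex subspace that is stable under conjugation (W̄ = W) and on which the bilinear form B is nondegenerate. Then the real subspace W_ℝ := W ∩ ℝ^{n+1,1} is 4-dimensional, and the restriction of ( , ) to W_ℝ has signature (3,1) (i.e. W_ℝ admits a basis whose Gram matrix is diag(1,1,1,−1)) if and only if every 2-dimensional B-isotropic complex subspace U ⊆ W satisfies dim_ℂ(U ∩ Ū) = 1. -/

import Mathlib

noncomputable section

open Module

/-- The complexification `ℂ^{n+2}` of `ℝ^{n+1,1}`. -/
abbrev Cn (n : ℕ) := Fin (n + 2) → ℂ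

/-- The complex-bilinear extension `B` of the signature `(n+1,1)` inner product on
`ℝ^{n+1,1}`. -/
def Bf (n : ℕ) (v w : Cn n) : ℂ :=
  ∑ i : Fin (n + 2), (if (i : ℕ) < n + 1 then 1 else -1) * v i * w i

lemma Bf_add_left {n : ℕ} (v v' w : Cn n) :
    Bf n (v + v') w = Bf n v w + Bf n v' w := by
  simp only [Bf, Pi.add_apply, ← Finset.sum_add_distrib]
  exact Finset.sum_congr rfl fun i _ => by ring

lemma Bf_smul_left {n : ℕ} (c : ℂ) (v w : Cn n) :
    Bf n (c • v) w = c * Bf n v w := by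
  simp only [Bf, Pi.smul_apply, smul_eq_mul, Finset.mul_sum]
  exact Finset.sum_congr rfl fun i _ => by ring

lemma Bf_zero_left {n : ℕ} (w : Cn n) : Bf n 0 w = 0 := by
  simp [Bf]

/-- Complex conjugation on `ℂ^{n+2}`, as a `conj`-semilinear automorphism;
its fixed point set is `ℝ^{n+1,1}`. -/
def conjSL (n : ℕ) : Cn n →ₛₗ[starRingEnd ℂ] Cn n where
  toFun v := fun i => starRingEnd ℂ (v i)
  map_add' a b := by funext i; simp
  map_smul' c v := by funext i; simp

instance : RingHomSurjective (starRingEnd ℂ) :=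
  ⟨fun x => ⟨starRingEnd ℂ x, by simp⟩⟩

/-- The conjugate `Ū` of a complex subspace `U` of `ℂ^{n+2}`. -/
def conjSub {n : ℕ} (U : Submodule ℂ (Cn n)) : Submodule ℂ (Cn n) :=
  U.map (conjSL n)

/-- The real points `ℝ^{n+1,1}` inside `ℂ^{n+2}`, as a real subspace. -/
def realSub (n : ℕ) : Submodule ℝ (Cn n) where
  carrier := {v | ∀ i, starRingEnd ℂ (v i) = v i}
  add_mem' := by
    intro a b ha hb i
    simp only [Pi.add_apply, map_add, ha i, hb i]
  zero_mem' := by intro i; simp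
  smul_mem' := by
    intro c v hv i
    simp only [Pi.smul_apply, Complex.real_smul, map_mul, Complex.conj_ofReal, hv i]

/-- The real points `W ∩ ℝ^{n+1,1}` of a complex subspace `W ⊆ ℂ^{n+2}`. -/
def realPoints {n : ℕ} (W : Submodule ℂ (Cn n)) : Submodule ℝ (Cn n) :=
  (W.restrictScalars ℝ) ⊓ realSub n

/-- The Gram matrix `diag(1,1,1,-1)`. -/
def gram31 (i j : Fin 4) : ℂ :=
  if i = j then (if (i : ℕ) < 3 then 1 else -1) else 0

/-- A real subspace `P` of `ℂ^{n+2}` has signature `(3,1)` if it admits a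
basis whose Gram matrix with respect to `B` is `diag(1,1,1,-1)`. -/
def hasSig31 (n : ℕ) (P : Submodule ℝ (Cn n)) : Prop :=
  ∃ b : Fin 4 → Cn n, (∀ i, b i ∈ P) ∧
    Submodule.span ℝ (Set.range b) = P ∧
    ∀ i j, Bf n (b i) (b j) = gram31 i j

/-- The orthogonal complement of a subspace with respect to `B`. -/
def perp (n : ℕ) (V : Submodule ℂ (Cn n)) : Submodule ℂ (Cn n) where
  carrier := {v | ∀ w ∈ V, Bf n v w = 0}
  add_mem' := by
    intro a b ha hb w hw
    rw [Bf_add_left, ha w hw, hb w hw, add_zero]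
  zero_mem' := by
    intro w hw
    exact Bf_zero_left w
  smul_mem' := by
    intro c v hv w hw
    rw [Bf_smul_left, hv w hw, mul_zero]

/-- `ρ` is the reflection across `V`: the identity on `V` and minus the identity
on `V^⊥`. -/
def IsReflection (n : ℕ) (V : Submodule ℂ (Cn n)) (ρ : Cn n →ₗ[ℂ] Cn n) : Prop :=
  (∀ v ∈ V, ρ v = v) ∧ (∀ v ∈ perp n V, ρ v = -v)

/-- The automorphism `Γ^{ℓ⁺}_{ℓ⁻}(λ)`, where `ℓ⁺, ℓ⁻` are the complementary null
lines spanned by `u` and `w`: it is multiplication by `λ` on `ℓ⁺`, by `λ⁻¹` on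
`ℓ⁻` and the identity on `(ℓ⁺ ⊕ ℓ⁻)^⊥`. -/
def GammaL (n : ℕ) (u w : Cn n) (lam : ℂ) : Cn n →ₗ[ℂ] Cn n where
  toFun v := v + ((lam - 1) * (Bf n v w / Bf n u w)) • u
      + ((lam⁻¹ - 1) * (Bf n v u / Bf n u w)) • w
  map_add' a b := by
    simp only [Bf_add_left]
    module
  map_smul' c v := by
    simp only [Bf_smul_left, RingHom.id_apply]
    module

/-- `λ ↦ λ* = 1/λ̄`. -/
def cstar (z : ℂ) : ℂ := (starRingEnd ℂ z)⁻¹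

/-- The linear fractional transformation appearing in the simple factor
`p^V_{α,L}`. -/
def psi (α lam : ℂ) : ℂ := (1 + α) * (lam - α) / ((1 - α) * (lam + α))

/-- The simple factor `p^V_{α,L}(λ) = Γ^L_{ρ_V L}((1+α)(λ-α)/((1-α)(λ+α)))`,
where `ρ` is the reflection across `V` and `ℓ` spans the null line `L`. -/
def pSF (n : ℕ) (ρ : Cn n →ₗ[ℂ] Cn n) (ℓ : Cn n) (α lam : ℂ) : Cn n →ₗ[ℂ] Cn n :=
  GammaL n ℓ (ρ ℓ) (psi α lam)

/-- The value `p^V_{α,L}(∞) = Γ^L_{ρ_V L}((1+α)/(1-α))`. -/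
def pSFinf (n : ℕ) (ρ : Cn n →ₗ[ℂ] Cn n) (ℓ : Cn n) (α : ℂ) : Cn n →ₗ[ℂ] Cn n :=
  GammaL n ℓ (ρ ℓ) ((1 + α) / (1 - α))


/-! ### Basic lemmas about `Bf`, `conjSL`, `realSub` -/

lemma Bf_comm {n : ℕ} (v w : Cn n) : Bf n v w = Bf n w v := by
  unfold Bf; exact Finset.sum_congr rfl fun i _ => by ring

lemma Bf_add_right {n : ℕ} (v w w' : Cn n) :
    Bf n v (w + w') = Bf n v w + Bf n v w' := by
  rw [Bf_comm, Bf_add_left, Bf_comm w v, Bf_comm w' v]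

lemma Bf_smul_right {n : ℕ} (c : ℂ) (v w : Cn n) :
    Bf n v (c • w) = c * Bf n v w := by
  rw [Bf_comm, Bf_smul_left, Bf_comm]

lemma Bf_zero_right {n : ℕ} (v : Cn n) : Bf n v 0 = 0 := by
  rw [Bf_comm]; exact Bf_zero_left v

lemma Bf_neg_left {n : ℕ} (v w : Cn n) : Bf n (-v) w = -Bf n v w := by
  have := Bf_smul_left (n := n) (-1) v w
  simpa using this

lemma Bf_sub_left {n : ℕ} (v v' w : Cn n) :
    Bf n (v - v') w = Bf n v w - Bf n v' w := by
  rw [sub_eq_add_neg, Bf_add_left, Bf_neg_left, sub_eq_add_neg]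

lemma Bf_sub_right {n : ℕ} (v w w' : Cn n) :
    Bf n v (w - w') = Bf n v w - Bf n v w' := by
  rw [Bf_comm, Bf_sub_left, Bf_comm w v, Bf_comm w' v]

lemma conjSL_apply {n : ℕ} (v : Cn n) (i : Fin (n + 2)) :
    conjSL n v i = starRingEnd ℂ (v i) := rfl

lemma conjSL_conjSL {n : ℕ} (v : Cn n) : conjSL n (conjSL n v) = v := by
  funext i; simp [conjSL_apply]

lemma Bf_conj {n : ℕ} (v w : Cn n) :
    Bf n (conjSL n v) (conjSL n w) = starRingEnd ℂ (Bf n v w) := by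
  unfold Bf
  rw [map_sum]
  refine Finset.sum_congr rfl fun i _ => ?_
  by_cases h : (i : ℕ) < n + 1 <;> simp [h, conjSL_apply, mul_comm, mul_assoc]

lemma mem_realSub_iff {n : ℕ} (v : Cn n) :
    v ∈ realSub n ↔ ∀ i, starRingEnd ℂ (v i) = v i := Iff.rfl

lemma conjSL_eq_self_of_mem {n : ℕ} {v : Cn n} (hv : v ∈ realSub n) :
    conjSL n v = v := by
  funext i; exact hv i

lemma Bf_real {n : ℕ} {v w : Cn n} (hv : v ∈ realSub n) (hw : w ∈ realSub n) :
    Bf n v w = ((Bf n v w).re : ℂ) := by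
  have h : starRingEnd ℂ (Bf n v w) = Bf n v w := by
    rw [← Bf_conj, conjSL_eq_self_of_mem hv, conjSL_eq_self_of_mem hw]
  exact (Complex.conj_eq_iff_re.mp h).symm

/-- A real vector has real coordinates. -/
lemma coord_real {n : ℕ} {v : Cn n} (hv : v ∈ realSub n) (i : Fin (n + 2)) :
    v i = ((v i).re : ℂ) :=
  (Complex.conj_eq_iff_re.mp (hv i)).symm

/-- For a real vector, the real part of `Bf v v` is a signed sum of squares. -/
lemma Bf_self_re {n : ℕ} {v : Cn n} (hv : v ∈ realSub n) :
    (Bf n v v).re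
      = ∑ i : Fin (n + 2), (if (i : ℕ) < n + 1 then 1 else -1) * (v i).re ^ 2 := by
  unfold Bf
  rw [Complex.re_sum]
  refine Finset.sum_congr rfl fun i _ => ?_
  rw [coord_real hv i]
  by_cases h : (i : ℕ) < n + 1 <;>
    simp [h, pow_two, ← Complex.ofReal_mul]

/-- The key ambient fact: a real vector whose last coordinate vanishes has
`(v,v) ≥ 0`, with equality only for `v = 0`. -/
lemma ambient_pos {n : ℕ} {v : Cn n} (hv : v ∈ realSub n)
    (hlast : v (Fin.last (n + 1)) = 0) :
    0 ≤ (Bf n v v).re ∧ ((Bf n v v).re = 0 → v = 0) := by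
  have hsum : (Bf n v v).re = ∑ i : Fin (n + 2), (if (i : ℕ) < n + 1 then 1 else -1) * (v i).re ^ 2 :=
    Bf_self_re hv
  have hterm : ∀ i : Fin (n + 2), (if (i : ℕ) < n + 1 then (1:ℝ) else -1) * (v i).re ^ 2 = (v i).re ^ 2 := by
    intro i
    by_cases h : (i : ℕ) < n + 1
    · simp [h]
    · have hi : (i : ℕ) = n + 1 := by
        have := i.isLt
        omega
      have : i = Fin.last (n + 1) := Fin.ext (by simp [hi])
      rw [this, hlast]
      simp
  rw [hsum, Finset.sum_congr rfl fun i _ => hterm i]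
  constructor
  · exact Finset.sum_nonneg fun i _ => sq_nonneg _
  · intro h0
    funext i
    have := (Finset.sum_eq_zero_iff_of_nonneg (fun i _ => sq_nonneg ((v i).re))).mp h0 i (Finset.mem_univ i)
    have hre : (v i).re = 0 := by
      nlinarith [this]
    rw [coord_real hv i, hre]
    simp

/-! ### Negativity lemmas from the ambient signature -/

lemma Bf_expand2 {n : ℕ} (a b : ℂ) (v w : Cn n) :
    Bf n (a • v + b • w) (a • v + b • w)
      = a ^ 2 * Bf n v v + 2 * (a * b) * Bf n v w + b ^ 2 * Bf n w w := by
  simp only [Bf_add_left, Bf_add_right, Bf_smul_left, Bf_smul_right]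
  rw [Bf_comm w v]
  ring

lemma smul_mem_realSub {n : ℕ} {v : Cn n} (hv : v ∈ realSub n) (r : ℝ) :
    (r : ℂ) • v ∈ realSub n := by
  intro i
  simp only [Pi.smul_apply, smul_eq_mul, map_mul, Complex.conj_ofReal, hv i]

lemma sub_mem_realSub {n : ℕ} {v w : Cn n} (hv : v ∈ realSub n) (hw : w ∈ realSub n) :
    v - w ∈ realSub n := by
  intro i
  simp only [Pi.sub_apply, map_sub, hv i, hw i]

/-- In `ℝ^{n+1,1}` there is no pair of orthogonal real vectors that are both
negative. -/
lemma no_two_neg {n : ℕ} {v w : Cn n} (hv : v ∈ realSub n) (hw : w ∈ realSub n)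
    (hvw : Bf n v w = 0) (hvv : (Bf n v v).re < 0) (hww : (Bf n w w).re < 0) :
    False := by
  set N := Fin.last (n + 1) with hN
  set r := (v N).re with hr
  set s := (w N).re with hs
  set u := (s : ℂ) • v + ((-r : ℝ) : ℂ) • w with hu
  have hureal : u ∈ realSub n := by
    rw [hu]
    intro i
    simp only [Pi.add_apply, Pi.smul_apply, smul_eq_mul, map_add, map_mul,
      Complex.conj_ofReal, hv i, hw i]
  have hulast : u (Fin.last (n + 1)) = 0 := by
    rw [hu]
    simp only [Pi.add_apply, Pi.smul_apply, smul_eq_mul, ← hN]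
    rw [coord_real hv N, coord_real hw N, ← hr, ← hs]
    push_cast
    ring
  have hBu : Bf n u u = (s : ℂ) ^ 2 * Bf n v v + ((-r : ℝ) : ℂ) ^ 2 * Bf n w w := by
    rw [hu, Bf_expand2, hvw]
    ring
  have hBure : (Bf n u u).re = s ^ 2 * (Bf n v v).re + r ^ 2 * (Bf n w w).re := by
    rw [hBu, Bf_real hv hv, Bf_real hw hw]
    simp only [Complex.ofReal_neg, neg_sq, ← Complex.ofReal_pow, ← Complex.ofReal_mul,
      ← Complex.ofReal_add, Complex.ofReal_re]
  have hpos := (ambient_pos hureal hulast).1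
  rw [hBure] at hpos
  have hr0 : r = 0 := by
    have h2 : r ^ 2 * (Bf n w w).re ≤ 0 :=
      mul_nonpos_of_nonneg_of_nonpos (sq_nonneg r) hww.le
    have h1 : s ^ 2 * (Bf n v v).re ≤ 0 :=
      mul_nonpos_of_nonneg_of_nonpos (sq_nonneg s) hvv.le
    have h3 : r ^ 2 * (Bf n w w).re = 0 := by linarith
    have h4 : r ^ 2 = 0 := by
      rcases mul_eq_zero.mp h3 with h | h
      · exact h
      · exact absurd h (ne_of_lt hww)
    exact pow_eq_zero_iff (two_ne_zero) |>.mp h4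
  have hvN : v N = 0 := by rw [coord_real hv N, ← hr, hr0]; simp
  have := (ambient_pos hv hvN).1
  linarith

/-- In `ℝ^{n+1,1}`, two orthogonal null real vectors are proportional. -/
lemma iso_pair {n : ℕ} {v w : Cn n} (hv : v ∈ realSub n) (hw : w ∈ realSub n)
    (hvv : Bf n v v = 0) (hww : Bf n w w = 0) (hvw : Bf n v w = 0) :
    v = 0 ∨ ∃ t : ℝ, w = (t : ℂ) • v := by
  set N := Fin.last (n + 1) with hN
  set r := (v N).re with hr
  set s := (w N).re with hs
  by_cases hrz : r = 0
  · left
    have hvN : v N = 0 := by rw [coord_real hv N, ← hr, hrz]; simp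
    exact (ambient_pos hv hvN).2 (by rw [hvv]; simp)
  · right
    set u := (s : ℂ) • v + ((-r : ℝ) : ℂ) • w with hu
    have hureal : u ∈ realSub n := by
      rw [hu]
      intro i
      simp only [Pi.add_apply, Pi.smul_apply, smul_eq_mul, map_add, map_mul,
        Complex.conj_ofReal, hv i, hw i]
    have hulast : u (Fin.last (n + 1)) = 0 := by
      rw [hu]
      simp only [Pi.add_apply, Pi.smul_apply, smul_eq_mul, ← hN]
      rw [coord_real hv N, coord_real hw N, ← hr, ← hs]
      push_cast
      ring
    have hBu : Bf n u u = 0 := by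
      rw [hu, Bf_expand2, hvw, hvv, hww]
      ring
    have hu0 : u = 0 := (ambient_pos hureal hulast).2 (by rw [hBu]; simp)
    refine ⟨s / r, ?_⟩
    have : (s : ℂ) • v = (r : ℂ) • w := by
      have : (s : ℂ) • v + ((-r : ℝ) : ℂ) • w = 0 := by rw [← hu, hu0]
      push_cast at this ⊢
      linear_combination (norm := module) this
    funext i
    have hcoord := congrFun this i
    simp only [Pi.smul_apply, smul_eq_mul] at hcoord ⊢
    have hrC : (r : ℂ) ≠ 0 := by exact_mod_cast hrz
    rw [Complex.ofReal_div, div_mul_eq_mul_div, eq_div_iff hrC]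
    linear_combination -hcoord

/-! ### Realification: real points of a conjugation-stable subspace -/

lemma mem_realPoints {n : ℕ} {V : Submodule ℂ (Cn n)} {v : Cn n} :
    v ∈ realPoints V ↔ v ∈ V ∧ v ∈ realSub n := by
  constructor
  · intro h
    exact ⟨h.1, h.2⟩
  · intro h
    exact ⟨h.1, h.2⟩

lemma conj_mem_of_conjStable {n : ℕ} {V : Submodule ℂ (Cn n)} (hV : conjSub V = V)
    {v : Cn n} (hv : v ∈ V) : conjSL n v ∈ V := by
  rw [← hV]
  exact Submodule.mem_map_of_mem hv

instance (n : ℕ) : FiniteDimensional ℝ (Cn n) := by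
  infer_instance

/-- The ℝ-linear map `(a, b) ↦ a + i b` from two copies of the real points
onto a conjugation-stable subspace. -/
def realifyMap {n : ℕ} (V : Submodule ℂ (Cn n)) :
    (realPoints V × realPoints V) →ₗ[ℝ] (V.restrictScalars ℝ) where
  toFun p := ⟨(p.1 : Cn n) + Complex.I • (p.2 : Cn n), by
    rw [Submodule.restrictScalars_mem]
    exact V.add_mem (mem_realPoints.mp p.1.2).1 (V.smul_mem _ (mem_realPoints.mp p.2.2).1)⟩
  map_add' p q := by
    apply Subtype.ext
    simp only [Submodule.coe_add, Prod.fst_add, Prod.snd_add]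
    rw [smul_add]
    abel
  map_smul' r p := by
    apply Subtype.ext
    simp only [RingHom.id_apply, SetLike.val_smul, Prod.smul_fst, Prod.smul_snd]
    rw [smul_comm Complex.I r]
    module

lemma realifyMap_bijective {n : ℕ} (V : Submodule ℂ (Cn n)) (hV : conjSub V = V) :
    Function.Bijective (realifyMap V) := by
  constructor
  · rw [← LinearMap.ker_eq_bot, LinearMap.ker_eq_bot']
    intro p hp
    have h : (p.1 : Cn n) + Complex.I • (p.2 : Cn n) = 0 := congrArg Subtype.val hp
    have h1 : (p.1 : Cn n) = 0 ∧ (p.2 : Cn n) = 0 := by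
      constructor <;> funext i <;>
      · have hc := congrFun h i
        simp only [Pi.add_apply, Pi.smul_apply, smul_eq_mul, Pi.zero_apply] at hc
        have hre1 := (mem_realPoints.mp p.1.2).2 i
        have hre2 := (mem_realPoints.mp p.2.2).2 i
        have hconj : starRingEnd ℂ ((p.1 : Cn n) i + Complex.I * (p.2 : Cn n) i) = 0 := by
          rw [hc]; simp
        rw [map_add, map_mul, hre1, hre2, Complex.conj_I] at hconj
        simp only [Pi.zero_apply]
        have e1 : (p.1 : Cn n) i = 0 := by linear_combination (hc + hconj) / 2
        have e2 : Complex.I * (p.2 : Cn n) i = 0 := by linear_combination (hc - hconj) / 2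
        first
        | exact e1
        | exact (mul_eq_zero.mp e2).resolve_left Complex.I_ne_zero
    exact Prod.ext (Subtype.ext h1.1) (Subtype.ext h1.2)
  · rintro ⟨v, hv⟩
    rw [Submodule.restrictScalars_mem] at hv
    have hcv : conjSL n v ∈ V := conj_mem_of_conjStable hV hv
    set a : Cn n := (2⁻¹ : ℂ) • (v + conjSL n v) with ha
    set b : Cn n := (-(Complex.I) * 2⁻¹) • (v - conjSL n v) with hb
    have haV : a ∈ V := V.smul_mem _ (V.add_mem hv hcv)
    have hbV : b ∈ V := V.smul_mem _ (V.sub_mem hv hcv)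
    have haR : a ∈ realSub n := by
      intro i
      rw [ha]
      simp only [Pi.smul_apply, Pi.add_apply, smul_eq_mul, map_mul, map_add]
      rw [conjSL_apply, RingHomCompTriple.comp_apply]
      simp [RingHom.id_apply, Complex.conj_conj, map_ofNat]
      ring
    have hbR : b ∈ realSub n := by
      intro i
      rw [hb]
      simp only [Pi.smul_apply, Pi.sub_apply, smul_eq_mul, map_mul, map_sub]
      rw [conjSL_apply]
      simp [Complex.conj_conj, Complex.conj_I, map_ofNat]
      ring
    refine ⟨(⟨a, mem_realPoints.mpr ⟨haV, haR⟩⟩, ⟨b, mem_realPoints.mpr ⟨hbV, hbR⟩⟩), ?_⟩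
    apply Subtype.ext
    show a + Complex.I • b = v
    rw [ha, hb]
    funext i
    simp only [Pi.smul_apply, Pi.add_apply, Pi.sub_apply, smul_eq_mul]
    linear_combination (-(2⁻¹ : ℂ) * (v i - conjSL n v i)) * Complex.I_sq

/-- The main realification lemma: the real points of a conjugation-stable
complex subspace have the same (real) dimension as its complex dimension. -/
lemma finrank_realPoints {n : ℕ} (V : Submodule ℂ (Cn n)) (hV : conjSub V = V) :
    Module.finrank ℝ (realPoints V) = Module.finrank ℂ V := by
  have e : (realPoints V × realPoints V) ≃ₗ[ℝ] (V.restrictScalars ℝ) :=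
    LinearEquiv.ofBijective _ (realifyMap_bijective V hV)
  have h1 := e.finrank_eq
  rw [Module.finrank_prod] at h1
  have h2 : Module.finrank ℝ (V.restrictScalars ℝ) = Module.finrank ℝ V :=
    ((Submodule.restrictScalarsEquiv ℝ ℂ (Cn n) V).restrictScalars ℝ).finrank_eq
  have h3 : Module.finrank ℝ ℂ * Module.finrank ℂ V = Module.finrank ℝ V :=
    Module.finrank_mul_finrank ℝ ℂ V
  rw [Complex.finrank_real_complex] at h3
  omega

/-! ### Bilinear-map packaging and real scalars -/

lemma real_smul_Cn {n : ℕ} (r : ℝ) (v : Cn n) : r • v = (r : ℂ) • v := by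
  rw [← smul_one_smul ℂ r v]
  norm_num

/-- `Bf` as a bilinear map. -/
def BfL (n : ℕ) : Cn n →ₗ[ℂ] Cn n →ₗ[ℂ] ℂ :=
  LinearMap.mk₂ ℂ (Bf n) Bf_add_left Bf_smul_left
    (fun v w w' => Bf_add_right v w w') (fun c v w => Bf_smul_right c v w)

@[simp] lemma BfL_apply {n : ℕ} (v w : Cn n) : BfL n v w = Bf n v w := rfl

lemma Bf_zero_right_of_real_span {n : ℕ} {x : Cn n} {s : Set (Cn n)}
    (h : ∀ y ∈ s, Bf n x y = 0) :
    ∀ y ∈ Submodule.span ℝ s, Bf n x y = 0 := by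
  intro y hy
  induction hy using Submodule.span_induction with
  | mem z hz => exact h z hz
  | zero => exact Bf_zero_right x
  | add a b _ _ ha hb => rw [Bf_add_right, ha, hb, add_zero]
  | smul r a _ ha => rw [real_smul_Cn, Bf_smul_right, ha, mul_zero]

/-! ### Decomposition of `W` over its real points, and a diagonal basis -/

section DiagBasis

variable {n : ℕ} {W : Submodule ℂ (Cn n)}

/-- Every element of `W` is `a + i b` with `a, b` real points. -/
lemma exists_real_decomp (hconj : conjSub W = W) {w : Cn n} (hw : w ∈ W) :
    ∃ a b : Cn n, a ∈ realPoints W ∧ b ∈ realPoints W ∧ w = a + Complex.I • b := by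
  obtain ⟨p, hp⟩ := (realifyMap_bijective W hconj).2
    ⟨w, (Submodule.restrictScalars_mem ℝ W w).mpr hw⟩
  exact ⟨p.1, p.2, p.1.2, p.2.2, (congrArg Subtype.val hp).symm⟩

lemma eq_zero_of_Bf_zero_on_real (hconj : conjSub W = W)
    (hnd : ∀ v ∈ W, (∀ w ∈ W, Bf n v w = 0) → v = 0) {x : Cn n} (hx : x ∈ W)
    (h : ∀ y ∈ realPoints W, Bf n x y = 0) : x = 0 := by
  apply hnd x hx
  intro w hw
  obtain ⟨a, b, ha, hb, rfl⟩ := exists_real_decomp hconj hw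
  rw [Bf_add_right, Bf_smul_right, h a ha, h b hb]
  ring

lemma exists_diag_basis (hdim : Module.finrank ℂ W = 4) (hconj : conjSub W = W)
    (hnd : ∀ v ∈ W, (∀ w ∈ W, Bf n v w = 0) → v = 0) :
    ∃ e : Fin 4 → Cn n, (∀ i, e i ∈ realPoints W) ∧
      Submodule.span ℝ (Set.range e) = realPoints W ∧
      Submodule.span ℂ (Set.range e) = W ∧
      (∀ i j, i ≠ j → Bf n (e i) (e j) = 0) ∧
      (∀ i, Bf n (e i) (e i) = 1 ∨ Bf n (e i) (e i) = -1) := by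
  classical
  set P := realPoints W with hP
  have hPrank : Module.finrank ℝ P = 4 := by
    rw [hP, finrank_realPoints W hconj, hdim]
  -- the real bilinear form on `P`
  let B' : LinearMap.BilinForm ℝ P := LinearMap.mk₂ ℝ (fun x y => (Bf n (x : Cn n) (y : Cn n)).re)
    (by intro x x' y
        simp only [Submodule.coe_add, Bf_add_left, Complex.add_re])
    (by intro r x y
        simp only [SetLike.val_smul, real_smul_Cn, Bf_smul_left]
        simp [Complex.mul_re])
    (by intro x y y'
        simp only [Submodule.coe_add, Bf_add_right, Complex.add_re])
    (by intro r x y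
        simp only [SetLike.val_smul, real_smul_Cn, Bf_smul_right]
        simp [Complex.mul_re])
  have hB'app : ∀ x y : P, B' x y = (Bf n (x : Cn n) (y : Cn n)).re := fun x y => rfl
  have hB'symm : B'.IsSymm := by
    rw [LinearMap.BilinForm.isSymm_def]
    intro x y
    simp only [hB'app, RingHom.id_apply, Bf_comm]
  obtain ⟨v, hv⟩ := LinearMap.BilinForm.exists_orthogonal_basis (LinearMap.BilinForm.isSymm_iff.mp hB'symm)
  let v4 : Basis (Fin 4) ℝ P := v.reindex (finCongr hPrank)
  -- `Bf` values between basis vectors are real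
  have hreal : ∀ x : P, (x : Cn n) ∈ realSub n := fun x => x.2.2
  have hW : ∀ x : P, (x : Cn n) ∈ W := fun x => x.2.1
  have hBfreal : ∀ x y : P, Bf n (x : Cn n) (y : Cn n) = ((B' x y : ℝ) : ℂ) := by
    intro x y
    rw [hB'app]
    exact Bf_real (hreal x) (hreal y)
  have hv4 : ∀ i : Fin 4, v4 i = v ((finCongr hPrank).symm i) := fun i =>
    v.reindex_apply (finCongr hPrank) i
  have hortho : ∀ i j : Fin 4, i ≠ j → Bf n (v4 i : Cn n) (v4 j : Cn n) = 0 := by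
    intro i j hij
    rw [hBfreal]
    have hne : (finCongr hPrank).symm i ≠ (finCongr hPrank).symm j := by
      intro hcon
      exact hij (by simpa using congrArg (finCongr hPrank) hcon)
    have h0 : B' (v ((finCongr hPrank).symm i)) (v ((finCongr hPrank).symm j)) = 0 := hv hne
    rw [hv4 i, hv4 j, h0]
    simp
  have hspanP : Submodule.span ℝ (Set.range (fun i => ((v4 i : P) : Cn n))) = P := by
    have : (Set.range fun i => ((v4 i : P) : Cn n)) = P.subtype '' Set.range v4 := by
      rw [← Set.range_comp]
      rfl
    rw [this, Submodule.span_image, v4.span_eq, Submodule.map_subtype_top]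
  -- the diagonal entries are nonzero
  have hdne : ∀ i : Fin 4, B' (v4 i) (v4 i) ≠ 0 := by
    intro i h0
    have hz : ∀ j : Fin 4, Bf n (v4 i : Cn n) (v4 j : Cn n) = 0 := by
      intro j
      by_cases hij : i = j
      · rw [← hij, hBfreal, h0]; simp
      · exact hortho i j hij
    have hzP : ∀ y ∈ P, Bf n (v4 i : Cn n) y = 0 := by
      intro y hy
      rw [← hspanP] at hy
      refine Bf_zero_right_of_real_span ?_ y hy
      rintro z ⟨j, rfl⟩
      exact hz j
    have : ((v4 i : P) : Cn n) = 0 := eq_zero_of_Bf_zero_on_real hconj hnd (hW _) hzP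
    exact v4.ne_zero i (by exact_mod_cast Subtype.ext this)
  -- rescale
  set d : Fin 4 → ℝ := fun i => B' (v4 i) (v4 i) with hd
  set c : Fin 4 → ℝ := fun i => (Real.sqrt |d i|)⁻¹ with hc
  have hcpos : ∀ i, 0 < c i := by
    intro i
    have : 0 < Real.sqrt |d i| := Real.sqrt_pos.mpr (abs_pos.mpr (hdne i))
    positivity
  have hc2 : ∀ i, c i ^ 2 * d i = if 0 < d i then 1 else -1 := by
    intro i
    have habs : Real.sqrt |d i| ^ 2 = |d i| := Real.sq_sqrt (abs_nonneg _)
    have : c i ^ 2 = |d i|⁻¹ := by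
      rw [hc, inv_pow, habs]
    rw [this]
    rcases lt_or_gt_of_ne (hdne i) with h | h
    · rw [abs_of_neg h, if_neg (by linarith), inv_neg, neg_mul,
        inv_mul_cancel₀ (show d i ≠ 0 from hdne i)]
    · rw [abs_of_pos h, if_pos h, inv_mul_cancel₀ (show d i ≠ 0 from hdne i)]
  set e : Fin 4 → Cn n := fun i => ((c i : ℝ) : ℂ) • ((v4 i : P) : Cn n) with he
  have heP : ∀ i, e i ∈ P := by
    intro i
    rw [he]
    simp only
    rw [← real_smul_Cn]
    exact P.smul_mem _ (v4 i).2
  have hgram : ∀ i j, Bf n (e i) (e j) = ((c i * c j : ℝ) : ℂ) * Bf n (v4 i : Cn n) (v4 j : Cn n) := by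
    intro i j
    rw [he]
    simp only
    rw [Bf_smul_left, Bf_smul_right]
    push_cast
    ring
  refine ⟨e, heP, ?_, ?_, ?_, ?_⟩
  · -- real span
    apply le_antisymm
    · rw [Submodule.span_le]
      rintro z ⟨i, rfl⟩
      exact heP i
    · rw [← hspanP, Submodule.span_le]
      rintro z ⟨i, rfl⟩
      have : ((v4 i : P) : Cn n) = (c i)⁻¹ • e i := by
        rw [he]
        simp only
        rw [real_smul_Cn, smul_smul]
        rw [← Complex.ofReal_mul]
        rw [inv_mul_cancel₀ (ne_of_gt (hcpos i))]
        simp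
      simp only [SetLike.mem_coe]
      rw [this]
      exact Submodule.smul_mem _ _ (Submodule.subset_span ⟨i, rfl⟩)
  · -- complex span
    apply le_antisymm
    · rw [Submodule.span_le]
      rintro z ⟨i, rfl⟩
      exact (mem_realPoints.mp (heP i)).1
    · intro w hw
      obtain ⟨a, b, ha, hb, rfl⟩ := exists_real_decomp hconj hw
      have hsub : (P : Set (Cn n)) ⊆ (Submodule.span ℂ (Set.range e) : Set (Cn n)) := by
        intro z hz
        have hz' : z ∈ Submodule.span ℝ (Set.range e) := by
          rw [show Submodule.span ℝ (Set.range e) = P from ?_]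
          · exact hz
          · apply le_antisymm
            · rw [Submodule.span_le]
              rintro z' ⟨i, rfl⟩
              exact heP i
            · rw [← hspanP, Submodule.span_le]
              rintro z' ⟨i, rfl⟩
              have : ((v4 i : P) : Cn n) = (c i)⁻¹ • e i := by
                rw [he]
                simp only
                rw [real_smul_Cn, smul_smul, ← Complex.ofReal_mul,
                  inv_mul_cancel₀ (ne_of_gt (hcpos i))]
                simp
              simp only [SetLike.mem_coe]
              rw [this]
              exact Submodule.smul_mem _ _ (Submodule.subset_span ⟨i, rfl⟩)
        exact Submodule.span_subset_span ℝ ℂ _ hz'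
      exact Submodule.add_mem _ (hsub ha) (Submodule.smul_mem _ _ (hsub hb))
  · -- off-diagonal
    intro i j hij
    rw [hgram, hortho i j hij, mul_zero]
  · -- diagonal
    intro i
    rw [hgram, hBfreal]
    rw [← Complex.ofReal_mul]
    have : c i * c i * d i = c i ^ 2 * d i := by ring
    rw [show (B' (v4 i) (v4 i) : ℝ) = d i from rfl, this, hc2 i]
    by_cases h : 0 < d i
    · left; rw [if_pos h]; simp
    · right; rw [if_neg h]; push_cast; ring

end DiagBasis

/-! ### Expansion of `Bf` over finite combinations, and signature from a negative vector -/

lemma Bf_combo {n : ℕ} (c d : Fin 4 → ℂ) (x y : Fin 4 → Cn n) :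
    Bf n (∑ i, c i • x i) (∑ j, d j • y j)
      = ∑ i, ∑ j, c i * d j * Bf n (x i) (y j) := by
  simp only [← BfL_apply, map_sum, LinearMap.sum_apply, map_smul,
    LinearMap.smul_apply, smul_eq_mul]
  rw [Finset.sum_comm]
  refine Finset.sum_congr rfl fun i _ => ?_
  rw [Finset.mul_sum]
  refine Finset.sum_congr rfl fun j _ => ?_
  simp only [BfL_apply]
  ring

lemma Bf_combo_single {n : ℕ} (c : Fin 4 → ℂ) (x : Fin 4 → Cn n)
    (hortho : ∀ i j, i ≠ j → Bf n (x i) (x j) = 0) (j : Fin 4) :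
    Bf n (∑ i, c i • x i) (x j) = c j * Bf n (x j) (x j) := by
  have : Bf n (∑ i, c i • x i) (x j) = ∑ i, c i * Bf n (x i) (x j) := by
    simp only [← BfL_apply, map_sum, LinearMap.sum_apply, map_smul,
      LinearMap.smul_apply, smul_eq_mul]
  rw [this, Finset.sum_eq_single j]
  · intro i _ hij
    rw [hortho i j hij, mul_zero]
  · intro h
    exact absurd (Finset.mem_univ j) h

/-- `W` contains a real vector of negative norm. -/
def hasNegVec (n : ℕ) (W : Submodule ℂ (Cn n)) : Prop :=
  ∃ v ∈ realPoints W, (Bf n v v).re < 0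

lemma neg_of_hasSig31 {n : ℕ} {W : Submodule ℂ (Cn n)}
    (h : hasSig31 n (realPoints W)) : hasNegVec n W := by
  obtain ⟨b, hbP, _, hgram⟩ := h
  refine ⟨b 3, hbP 3, ?_⟩
  rw [hgram 3 3]
  norm_num [gram31, show ((3 : Fin 4) : ℕ) = 3 from rfl]

lemma Bf_self_combo {n : ℕ} {e : Fin 4 → Cn n}
    (hortho : ∀ i j, i ≠ j → Bf n (e i) (e j) = 0) (a : Fin 4 → ℂ) :
    Bf n (∑ i, a i • e i) (∑ j, a j • e j)
      = ∑ i, a i ^ 2 * Bf n (e i) (e i) := by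
  rw [Bf_combo]
  refine Finset.sum_congr rfl fun i _ => ?_
  rw [Finset.sum_eq_single i]
  · ring
  · intro j _ hji
    rw [hortho i j (Ne.symm hji), mul_zero]
  · intro h
    exact absurd (Finset.mem_univ i) h

lemma real_combo_of_mem_span {n : ℕ} {e : Fin 4 → Cn n} {v : Cn n}
    (hv : v ∈ Submodule.span ℝ (Set.range e)) :
    ∃ a : Fin 4 → ℝ, ∑ i, ((a i : ℝ) : ℂ) • e i = v := by
  obtain ⟨a, ha⟩ := (Submodule.mem_span_range_iff_exists_fun ℝ).mp hv
  exact ⟨a, by rw [← ha]; exact Finset.sum_congr rfl fun i _ => (real_smul_Cn (a i) (e i)).symm⟩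

lemma nonneg_of_all_pos {n : ℕ} {W : Submodule ℂ (Cn n)} {e : Fin 4 → Cn n}
    (hspanR : Submodule.span ℝ (Set.range e) = realPoints W)
    (hortho : ∀ i j, i ≠ j → Bf n (e i) (e j) = 0)
    (hpos : ∀ i, Bf n (e i) (e i) = 1) :
    ∀ v ∈ realPoints W, 0 ≤ (Bf n v v).re := by
  intro v hv
  rw [← hspanR] at hv
  obtain ⟨a, ha⟩ := real_combo_of_mem_span hv
  rw [← ha, Bf_self_combo hortho]
  rw [Complex.re_sum]
  refine Finset.sum_nonneg fun i _ => ?_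
  rw [hpos i, mul_one, ← Complex.ofReal_pow, Complex.ofReal_re]
  exact sq_nonneg _

lemma hasSig31_of_neg {n : ℕ} {W : Submodule ℂ (Cn n)} {e : Fin 4 → Cn n}
    (heP : ∀ i, e i ∈ realPoints W)
    (hspanR : Submodule.span ℝ (Set.range e) = realPoints W)
    (hortho : ∀ i j, i ≠ j → Bf n (e i) (e j) = 0)
    (hdiag : ∀ i, Bf n (e i) (e i) = 1 ∨ Bf n (e i) (e i) = -1)
    (hneg : hasNegVec n W) : hasSig31 n (realPoints W) := by
  by_cases hall : ∀ i, Bf n (e i) (e i) = 1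
  · exfalso
    obtain ⟨v, hv, hlt⟩ := hneg
    exact absurd (nonneg_of_all_pos hspanR hortho hall v hv) (by linarith)
  push_neg at hall
  obtain ⟨i0, hi0⟩ := hall
  have hi0neg : Bf n (e i0) (e i0) = -1 := (hdiag i0).resolve_left hi0
  have huniq : ∀ j, j ≠ i0 → Bf n (e j) (e j) = 1 := by
    intro j hj
    rcases hdiag j with h | h
    · exact h
    · exfalso
      refine no_two_neg (mem_realPoints.mp (heP i0)).2 (mem_realPoints.mp (heP j)).2
        (hortho i0 j (Ne.symm hj)) ?_ ?_
      · rw [hi0neg]; norm_num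
      · rw [h]; norm_num
  set σ := Equiv.swap i0 (3 : Fin 4) with hσdef
  refine ⟨fun i => e (σ i), fun i => heP _, ?_, ?_⟩
  · have : Set.range (fun i => e (σ i)) = Set.range e := by
      rw [show (fun i => e (σ i)) = e ∘ σ from rfl, Set.range_comp,
        Equiv.range_eq_univ, Set.image_univ]
    rw [this, hspanR]
  · intro i j
    show Bf n (e (σ i)) (e (σ j)) = gram31 i j
    by_cases hij : i = j
    · subst hij
      by_cases h3 : i = 3
      · subst h3
        rw [show σ 3 = i0 from Equiv.swap_apply_right i0 3, hi0neg]
        norm_num [gram31, show ((3 : Fin 4) : ℕ) = 3 from rfl]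
      · have hσi : σ i ≠ i0 := by
          intro hcon
          have h' := congrArg σ hcon
          rw [Equiv.swap_apply_self, Equiv.swap_apply_left] at h'
          exact h3 h'
        rw [huniq (σ i) hσi]
        have hv3 : (i : ℕ) ≠ 3 := fun h => h3 (Fin.ext h)
        have hlt4 := i.isLt
        have hi3 : (i : ℕ) < 3 := by omega
        simp [gram31, hi3]
    · rw [hortho (σ i) (σ j) (fun hcon => hij (σ.injective hcon))]
      simp only [gram31, if_neg hij]

/-! ### The counterexample when the form is definite -/

lemma Bf_expand_Ipair {n : ℕ} (a b c d : Cn n) :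
    Bf n (a + Complex.I • b) (c + Complex.I • d)
      = Bf n a c + Complex.I * Bf n a d + Complex.I * Bf n b c - Bf n b d := by
  simp only [Bf_add_left, Bf_add_right, Bf_smul_left, Bf_smul_right]
  linear_combination (Bf n b d) * Complex.I_sq

lemma not_rhs_of_not_neg {n : ℕ} {W : Submodule ℂ (Cn n)} {e : Fin 4 → Cn n}
    (heP : ∀ i, e i ∈ realPoints W)
    (hspanC : Submodule.span ℂ (Set.range e) = W)
    (hortho : ∀ i j, i ≠ j → Bf n (e i) (e j) = 0)
    (hdiag : ∀ i, Bf n (e i) (e i) = 1 ∨ Bf n (e i) (e i) = -1)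
    (hnoneg : ¬ hasNegVec n W) :
    ∃ U : Submodule ℂ (Cn n), U ≤ W ∧ Module.finrank ℂ U = 2 ∧
      (∀ u ∈ U, ∀ v ∈ U, Bf n u v = 0) ∧ Module.finrank ℂ ↥(U ⊓ conjSub U) = 0 := by
  classical
  have hpos : ∀ i, Bf n (e i) (e i) = 1 := by
    intro i
    rcases hdiag i with h | h
    · exact h
    · exact absurd ⟨e i, heP i, by rw [h]; norm_num⟩ hnoneg
  have heW : ∀ i, e i ∈ W := fun i => (mem_realPoints.mp (heP i)).1
  have heR : ∀ i, e i ∈ realSub n := fun i => (mem_realPoints.mp (heP i)).2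
  have indep4 : ∀ c : Fin 4 → ℂ, ∑ i, c i • e i = 0 → ∀ j, c j = 0 := by
    intro c hc j
    have h := Bf_combo_single c e hortho j
    rw [hc, Bf_zero_left, hpos j, mul_one] at h
    exact h.symm
  set w1 := e 0 + Complex.I • e 1 with hw1
  set w2 := e 2 + Complex.I • e 3 with hw2
  have hB11 : Bf n w1 w1 = 0 := by
    rw [hw1, Bf_expand_Ipair, hpos 0, hpos 1,
      hortho 0 1 (by decide), hortho 1 0 (by decide)]
    ring
  have hB22 : Bf n w2 w2 = 0 := by
    rw [hw2, Bf_expand_Ipair, hpos 2, hpos 3,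
      hortho 2 3 (by decide), hortho 3 2 (by decide)]
    ring
  have hB12 : Bf n w1 w2 = 0 := by
    rw [hw1, hw2, Bf_expand_Ipair, hortho 0 2 (by decide), hortho 0 3 (by decide),
      hortho 1 2 (by decide), hortho 1 3 (by decide)]
    ring
  have hB21 : Bf n w2 w1 = 0 := by
    rw [Bf_comm]
    exact hB12
  set U := Submodule.span ℂ ({w1, w2} : Set (Cn n)) with hU
  have hw1U : w1 ∈ U := Submodule.subset_span (by simp)
  have hw2U : w2 ∈ U := Submodule.subset_span (by simp)
  have hw1W : w1 ∈ W := W.add_mem (heW 0) (W.smul_mem _ (heW 1))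
  have hw2W : w2 ∈ W := W.add_mem (heW 2) (W.smul_mem _ (heW 3))
  -- linear independence of `w1, w2`
  have hindep : ∀ s t : ℂ, s • w1 + t • w2 = 0 → s = 0 ∧ t = 0 := by
    intro s t hst
    have hsum : ∑ i, (![s, Complex.I * s, t, Complex.I * t]) i • e i = 0 := by
      rw [Fin.sum_univ_four]
      simp only [Matrix.cons_val_zero, Matrix.cons_val_one, Matrix.head_cons,
        Matrix.cons_val_two, Matrix.tail_cons, Matrix.cons_val_three]
      rw [hw1, hw2] at hst
      linear_combination (norm := module) hst
    refine ⟨?_, ?_⟩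
    · have := indep4 _ hsum 0
      simpa using this
    · have := indep4 _ hsum 2
      simpa using this
  refine ⟨U, ?_, ?_, ?_, ?_⟩
  · rw [hU, Submodule.span_le]
    rintro z hz
    rcases hz with rfl | hz
    · exact hw1W
    · rw [Set.mem_singleton_iff] at hz
      rw [hz]
      exact hw2W
  · -- finrank U = 2
    have hrange : ({w1, w2} : Set (Cn n)) = Set.range ![w1, w2] := by
      ext z
      simp [Fin.exists_fin_two]
      tauto
    have hli : LinearIndependent ℂ ![w1, w2] := by
      rw [LinearIndependent.pair_iff]
      exact hindep
    rw [hU, hrange, finrank_span_eq_card hli]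
    simp
  · -- isotropic
    intro u hu v hv
    rw [hU, Submodule.mem_span_pair] at hu hv
    obtain ⟨a, b, rfl⟩ := hu
    obtain ⟨c, d, rfl⟩ := hv
    simp only [Bf_add_left, Bf_add_right, Bf_smul_left, Bf_smul_right,
      hB11, hB22, hB12, hB21]
    ring
  · -- trivial intersection with the conjugate
    have hcw1 : conjSL n w1 = e 0 + (-Complex.I) • e 1 := by
      rw [hw1, map_add, map_smulₛₗ, conjSL_eq_self_of_mem (heR 0),
        conjSL_eq_self_of_mem (heR 1), Complex.conj_I]
    have hcw2 : conjSL n w2 = e 2 + (-Complex.I) • e 3 := by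
      rw [hw2, map_add, map_smulₛₗ, conjSL_eq_self_of_mem (heR 2),
        conjSL_eq_self_of_mem (heR 3), Complex.conj_I]
    have hconjU : conjSub U = Submodule.span ℂ ({conjSL n w1, conjSL n w2} : Set (Cn n)) := by
      rw [hU, conjSub, Submodule.map_span, Set.image_pair]
    have hbot : U ⊓ conjSub U = ⊥ := by
      rw [Submodule.eq_bot_iff]
      intro v hv
      rw [Submodule.mem_inf] at hv
      obtain ⟨hv1, hv2⟩ := hv
      rw [hU] at hv1
      rw [hconjU] at hv2
      rw [Submodule.mem_span_pair] at hv1 hv2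
      obtain ⟨a, b, hab⟩ := hv1
      obtain ⟨c, d, hcd⟩ := hv2
      rw [hcw1, hcw2] at hcd
      have hsum : ∑ i, (![a - c, Complex.I * (a + c), b - d, Complex.I * (b + d)]) i • e i = 0 := by
        rw [Fin.sum_univ_four]
        simp only [Matrix.cons_val_zero, Matrix.cons_val_one, Matrix.head_cons,
          Matrix.cons_val_two, Matrix.tail_cons, Matrix.cons_val_three]
        rw [hw1, hw2] at hab
        linear_combination (norm := module) hab - hcd
      have h0 := indep4 _ hsum 0
      have h1 := indep4 _ hsum 1
      have h2 := indep4 _ hsum 2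
      have h3 := indep4 _ hsum 3
      simp only [Matrix.cons_val_zero, Matrix.cons_val_one, Matrix.head_cons,
        Matrix.cons_val_two, Matrix.tail_cons, Matrix.cons_val_three] at h0 h1 h2 h3
      have ha : a = 0 := by
        have h1' : a + c = 0 := by
          rcases mul_eq_zero.mp h1 with h | h
          · exact absurd h Complex.I_ne_zero
          · exact h
        have : a - c = 0 := h0
        linear_combination (this + h1') / 2
      have hb : b = 0 := by
        have h3' : b + d = 0 := by
          rcases mul_eq_zero.mp h3 with h | h
          · exact absurd h Complex.I_ne_zero
          · exact h
        have : b - d = 0 := h2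
        linear_combination (this + h3') / 2
      rw [← hab, ha, hb]
      simp
    rw [hbot]
    exact finrank_bot ℂ (Cn n)

/-! ### Hermitian Gram–Schmidt in a 2-dimensional subspace -/

lemma Bf_conj_symm {n : ℕ} (x y : Cn n) :
    Bf n x (conjSL n y) = starRingEnd ℂ (Bf n y (conjSL n x)) := by
  rw [← Bf_conj, conjSL_conjSL, Bf_comm]

/-- One step of Gram–Schmidt for the hermitian pairing. -/
lemma gs_step {n : ℕ} (u1 v : Cn n)
    (hind : ∀ s t : ℂ, s • u1 + t • v = 0 → s = 0 ∧ t = 0)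
    (hm : Bf n u1 (conjSL n u1) ≠ 0) :
    (∀ s t : ℂ, s • u1 + t • ((Bf n u1 (conjSL n u1)) • v - (Bf n v (conjSL n u1)) • u1) = 0
      → s = 0 ∧ t = 0) ∧
    Bf n ((Bf n u1 (conjSL n u1)) • v - (Bf n v (conjSL n u1)) • u1) (conjSL n u1) = 0 := by
  set m := Bf n u1 (conjSL n u1) with hmdef
  set c := Bf n v (conjSL n u1) with hcdef
  constructor
  · intro s t hst
    have h' : (s - t * c) • u1 + (t * m) • v = 0 := by
      linear_combination (norm := module) hst
    obtain ⟨h1, h2⟩ := hind _ _ h'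
    have ht : t = 0 := by
      rcases mul_eq_zero.mp h2 with h | h
      · exact h
      · exact absurd h hm
    refine ⟨?_, ht⟩
    rw [ht] at h1
    simpa using h1
  · rw [Bf_sub_left, Bf_smul_left, Bf_smul_left]
    ring

lemma exists_h_orthogonal {n : ℕ} (W1 W2 : Cn n)
    (hindep : ∀ s t : ℂ, s • W1 + t • W2 = 0 → s = 0 ∧ t = 0) :
    ∃ u1 u2 : Cn n, u1 ∈ Submodule.span ℂ ({W1, W2} : Set (Cn n)) ∧
      u2 ∈ Submodule.span ℂ ({W1, W2} : Set (Cn n)) ∧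
      (∀ s t : ℂ, s • u1 + t • u2 = 0 → s = 0 ∧ t = 0) ∧
      Bf n u2 (conjSL n u1) = 0 := by
  have hW1 : W1 ∈ Submodule.span ℂ ({W1, W2} : Set (Cn n)) := Submodule.subset_span (by simp)
  have hW2 : W2 ∈ Submodule.span ℂ ({W1, W2} : Set (Cn n)) := Submodule.subset_span (by simp)
  set p := Bf n W1 (conjSL n W1) with hp
  set q := Bf n W2 (conjSL n W2) with hq
  set r := Bf n W1 (conjSL n W2) with hr
  set r' := Bf n W2 (conjSL n W1) with hr'
  have hexp : ∀ c : ℂ, Bf n (W1 + c • W2) (conjSL n (W1 + c • W2))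
      = p + c * starRingEnd ℂ c * q + starRingEnd ℂ c * r + c * r' := by
    intro c
    rw [map_add, map_smulₛₗ]
    simp only [Bf_add_left, Bf_add_right, Bf_smul_left, Bf_smul_right]
    ring
  by_cases hp0 : p ≠ 0
  · obtain ⟨h1, h2⟩ := gs_step W1 W2 hindep hp0
    exact ⟨W1, _, hW1,
      Submodule.sub_mem _ (Submodule.smul_mem _ _ hW2) (Submodule.smul_mem _ _ hW1), h1, h2⟩
  by_cases hq0 : q ≠ 0
  · have hindep' : ∀ s t : ℂ, s • W2 + t • W1 = 0 → s = 0 ∧ t = 0 := by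
      intro s t hst
      obtain ⟨h1, h2⟩ := hindep t s (by linear_combination (norm := module) hst)
      exact ⟨h2, h1⟩
    obtain ⟨h1, h2⟩ := gs_step W2 W1 hindep' hq0
    exact ⟨W2, _, hW2,
      Submodule.sub_mem _ (Submodule.smul_mem _ _ hW1) (Submodule.smul_mem _ _ hW2), h1, h2⟩
  push_neg at hp0 hq0
  by_cases hs0 : Bf n (W1 + (1:ℂ) • W2) (conjSL n (W1 + (1:ℂ) • W2)) ≠ 0
  · have hind1 : ∀ s t : ℂ, s • (W1 + (1:ℂ) • W2) + t • W2 = 0 → s = 0 ∧ t = 0 := by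
      intro s t hst
      obtain ⟨h1, h2⟩ := hindep s (s + t) (by linear_combination (norm := module) hst)
      exact ⟨h1, by linear_combination h2 - h1⟩
    obtain ⟨h1, h2⟩ := gs_step (W1 + (1:ℂ) • W2) W2 hind1 hs0
    have hu1mem : W1 + (1:ℂ) • W2 ∈ Submodule.span ℂ ({W1, W2} : Set (Cn n)) :=
      Submodule.add_mem _ hW1 (Submodule.smul_mem _ _ hW2)
    exact ⟨_, _, hu1mem,
      Submodule.sub_mem _ (Submodule.smul_mem _ _ hW2) (Submodule.smul_mem _ _ hu1mem), h1, h2⟩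
  by_cases hi0 : Bf n (W1 + Complex.I • W2) (conjSL n (W1 + Complex.I • W2)) ≠ 0
  · have hind1 : ∀ s t : ℂ, s • (W1 + Complex.I • W2) + t • W2 = 0 → s = 0 ∧ t = 0 := by
      intro s t hst
      obtain ⟨h1, h2⟩ := hindep s (s * Complex.I + t)
        (by linear_combination (norm := module) hst)
      exact ⟨h1, by linear_combination h2 - Complex.I * h1⟩
    obtain ⟨h1, h2⟩ := gs_step (W1 + Complex.I • W2) W2 hind1 hi0
    have hu1mem : W1 + Complex.I • W2 ∈ Submodule.span ℂ ({W1, W2} : Set (Cn n)) :=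
      Submodule.add_mem _ hW1 (Submodule.smul_mem _ _ hW2)
    exact ⟨_, _, hu1mem,
      Submodule.sub_mem _ (Submodule.smul_mem _ _ hW2) (Submodule.smul_mem _ _ hu1mem), h1, h2⟩
  push_neg at hs0 hi0
  rw [hexp 1] at hs0
  rw [hexp Complex.I] at hi0
  simp only [map_one, one_mul, mul_one, Complex.conj_I] at hs0 hi0
  have hr'0 : r' = 0 := by
    have h1 : r + r' = 0 := by linear_combination hs0 - hp0 - hq0
    have h2 : -Complex.I * r + Complex.I * r' = 0 := by
      linear_combination hi0 - hp0 - hq0 + q * Complex.I_sq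
    have h3 : r - r' = 0 := by
      linear_combination Complex.I * h2 + (r - r') * Complex.I_sq
    linear_combination (h1 - h3) / 2
  exact ⟨W1, W2, hW1, hW2, hindep, hr'0⟩

/-! ### The two impossible cases for the intersection with the conjugate -/

/-- A conjugation-stable 2-dimensional isotropic subspace is impossible. -/
lemma no_conj_stable_iso {n : ℕ} {U : Submodule ℂ (Cn n)}
    (hU2 : Module.finrank ℂ U = 2)
    (hiso : ∀ u ∈ U, ∀ v ∈ U, Bf n u v = 0)
    (hstab : conjSub U = U) : False := by
  have hrk : Module.finrank ℝ (realPoints U) = 2 := by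
    rw [finrank_realPoints U hstab, hU2]
  let b := Module.finBasisOfFinrankEq (R := ℝ) (M := ↥(realPoints U)) hrk
  set x := ((b 0 : ↥(realPoints U)) : Cn n) with hx
  set y := ((b 1 : ↥(realPoints U)) : Cn n) with hy
  have hxU : x ∈ U := (mem_realPoints.mp (b 0).2).1
  have hyU : y ∈ U := (mem_realPoints.mp (b 1).2).1
  have hxR : x ∈ realSub n := (mem_realPoints.mp (b 0).2).2
  have hyR : y ∈ realSub n := (mem_realPoints.mp (b 1).2).2
  have hbpair : (⇑b : Fin 2 → ↥(realPoints U)) = ![b 0, b 1] := by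
    funext i
    fin_cases i <;> rfl
  have hli := b.linearIndependent
  rw [hbpair, LinearIndependent.pair_iff] at hli
  rcases iso_pair hxR hyR (hiso x hxU x hxU) (hiso y hyU y hyU) (hiso x hxU y hyU) with
    h | ⟨t, ht⟩
  · exact b.ne_zero 0 (Submodule.coe_eq_zero.mp h)
  · have hrel : t • (b 0) + (-1 : ℝ) • (b 1) = 0 := by
      apply Subtype.ext
      push_cast
      rw [real_smul_Cn, ← hx, ← hy, ht]
      module
    obtain ⟨-, hcon⟩ := hli t (-1) hrel
    norm_num at hcon

lemma xy_gram {n : ℕ} (u : Cn n) (h0 : Bf n u u = 0) :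
    Bf n (u + conjSL n u) (u + conjSL n u) = 2 * Bf n u (conjSL n u)
    ∧ Bf n ((-Complex.I) • (u - conjSL n u)) ((-Complex.I) • (u - conjSL n u))
        = 2 * Bf n u (conjSL n u)
    ∧ Bf n (u + conjSL n u) ((-Complex.I) • (u - conjSL n u)) = 0 := by
  have hcc : Bf n (conjSL n u) (conjSL n u) = 0 := by
    rw [Bf_conj, h0, map_zero]
  have hcu : Bf n (conjSL n u) u = Bf n u (conjSL n u) := Bf_comm _ _
  have hsub : ∀ w : Cn n, Bf n (u - conjSL n u) w = Bf n u w - Bf n (conjSL n u) w :=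
    fun w => Bf_sub_left _ _ _
  refine ⟨?_, ?_, ?_⟩
  · simp only [Bf_add_left, Bf_add_right, h0, hcc, hcu]
    ring
  · simp only [Bf_smul_left, Bf_smul_right, Bf_sub_left, Bf_sub_right, h0, hcc, hcu]
    linear_combination (-(2:ℂ) * Bf n u (conjSL n u)) * Complex.I_sq
  · simp only [Bf_smul_right, Bf_add_left, Bf_sub_right, h0, hcc, hcu]
    ring

lemma real_of_add_conj {n : ℕ} (u : Cn n) : u + conjSL n u ∈ realSub n := by
  intro i
  simp only [Pi.add_apply, map_add, conjSL_apply, Complex.conj_conj]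
  ring

lemma real_of_negI_sub_conj {n : ℕ} (u : Cn n) :
    (-Complex.I) • (u - conjSL n u) ∈ realSub n := by
  intro i
  simp only [Pi.smul_apply, Pi.sub_apply, smul_eq_mul, map_mul, map_sub,
    conjSL_apply, Complex.conj_conj, map_neg, Complex.conj_I]
  ring

/-- An isotropic 2-plane meeting its conjugate trivially is impossible when `W`
contains a real vector of negative norm. -/
lemma no_disjoint_iso {n : ℕ} {W U : Submodule ℂ (Cn n)}
    (hdim : Module.finrank ℂ W = 4) (hconj : conjSub W = W)
    (hneg : hasNegVec n W)
    (hUW : U ≤ W) (hU2 : Module.finrank ℂ U = 2)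
    (hiso : ∀ u ∈ U, ∀ v ∈ U, Bf n u v = 0)
    (hbot : U ⊓ conjSub U = ⊥) : False := by
  classical
  have hconjUW : conjSub U ≤ W := by
    rw [← hconj]
    exact Submodule.map_mono hUW
  -- the key elimination for a null vector of the hermitian pairing
  have key : ∀ u, u ∈ U → u ≠ 0 → Bf n u (conjSL n u) = 0 → False := by
    intro u huU hune hmu
    set cu := conjSL n u with hcu
    have hcuU : cu ∈ conjSub U := Submodule.mem_map_of_mem huU
    obtain ⟨hxx, hyy, hxy⟩ := xy_gram u (hiso u huU u huU)
    rw [hmu, mul_zero] at hxx hyy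
    rcases iso_pair (real_of_add_conj u) (real_of_negI_sub_conj u) hxx hyy hxy with
      h | ⟨t, ht⟩
    · -- u + conj u = 0
      have : -u ∈ U ⊓ conjSub U := by
        constructor
        · exact U.neg_mem huU
        · have : cu = -u := by
            rw [← hcu] at h
            linear_combination (norm := module) h
          rw [← this]
          exact hcuU
      rw [hbot, Submodule.mem_bot] at this
      exact hune (by simpa using this)
    · -- (-I)(u - conj u) = t (u + conj u)
      have hrel : (-Complex.I - (t : ℂ)) • u = ((t : ℂ) - Complex.I) • cu := by
        rw [← hcu] at ht
        linear_combination (norm := module) ht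
      have hmem : (-Complex.I - (t : ℂ)) • u ∈ U ⊓ conjSub U := by
        constructor
        · exact U.smul_mem _ huU
        · rw [hrel]
          exact Submodule.smul_mem _ _ hcuU
      rw [hbot, Submodule.mem_bot] at hmem
      rcases smul_eq_zero.mp hmem with h | h
      · have := congrArg Complex.im h
        simp at this
      · exact hune h
  -- basis of U
  let bU := Module.finBasisOfFinrankEq (R := ℂ) (M := ↥U) hU2
  set W1 := ((bU 0 : ↥U) : Cn n) with hW1def
  set W2 := ((bU 1 : ↥U) : Cn n) with hW2def
  have hW1U : W1 ∈ U := (bU 0).2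
  have hW2U : W2 ∈ U := (bU 1).2
  have hspan2 : Submodule.span ℂ ({W1, W2} : Set (Cn n)) = U := by
    have h1 : Submodule.span ℂ (Set.range (fun i : Fin 2 => ((bU i : ↥U) : Cn n))) = U := by
      have : (Set.range fun i : Fin 2 => ((bU i : ↥U) : Cn n)) = U.subtype '' Set.range bU := by
        rw [← Set.range_comp]
        rfl
      rw [this, Submodule.span_image, bU.span_eq, Submodule.map_subtype_top]
    have h2 : (Set.range fun i : Fin 2 => ((bU i : ↥U) : Cn n)) = {W1, W2} := by
      ext z
      simp only [Set.mem_range, Set.mem_insert_iff, Set.mem_singleton_iff]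
      constructor
      · rintro ⟨i, rfl⟩
        fin_cases i
        · left; rfl
        · right; rfl
      · rintro (rfl | rfl)
        · exact ⟨0, rfl⟩
        · exact ⟨1, rfl⟩
    rw [← h2, h1]
  have hindep : ∀ s t : ℂ, s • W1 + t • W2 = 0 → s = 0 ∧ t = 0 := by
    intro s t hst
    have hrel : s • (bU 0) + t • (bU 1) = 0 := by
      apply Subtype.ext
      push_cast
      rw [← hW1def, ← hW2def, hst]
    have hli := bU.linearIndependent
    have hbpair : (⇑bU : Fin 2 → ↥U) = ![bU 0, bU 1] := by
      funext i
      fin_cases i <;> rfl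
    rw [hbpair, LinearIndependent.pair_iff] at hli
    exact hli s t hrel
  obtain ⟨u1, u2, hu1m, hu2m, hind, horth⟩ := exists_h_orthogonal W1 W2 hindep
  rw [hspan2] at hu1m hu2m
  set cu1 := conjSL n u1 with hcu1def
  set cu2 := conjSL n u2 with hcu2def
  have hcu1m : cu1 ∈ conjSub U := Submodule.mem_map_of_mem hu1m
  have hcu2m : cu2 ∈ conjSub U := Submodule.mem_map_of_mem hu2m
  have hu1ne : u1 ≠ 0 := by
    intro h
    have := (hind 1 0 (by rw [h]; module)).1
    norm_num at this
  have hu2ne : u2 ≠ 0 := by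
    intro h
    have := (hind 0 1 (by rw [h]; module)).2
    norm_num at this
  set mu1 := Bf n u1 cu1 with hmu1def
  set mu2 := Bf n u2 cu2 with hmu2def
  have hmu1real : mu1 = ((mu1.re : ℝ) : ℂ) := by
    have := Bf_conj_symm u1 u1
    rw [← hcu1def, ← hmu1def] at this
    exact (Complex.conj_eq_iff_re.mp this.symm).symm
  have hmu2real : mu2 = ((mu2.re : ℝ) : ℂ) := by
    have := Bf_conj_symm u2 u2
    rw [← hcu2def, ← hmu2def] at this
    exact (Complex.conj_eq_iff_re.mp this.symm).symm
  have horth' : Bf n u1 cu2 = 0 := by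
    rw [hcu2def, Bf_conj_symm u1 u2, ← hcu1def, horth, map_zero]
  -- eliminate null and negative cases
  by_cases hmu10 : mu1 = 0
  · exact key u1 hu1m hu1ne (by rw [← hcu1def, ← hmu1def]; exact hmu10)
  by_cases hmu20 : mu2 = 0
  · exact key u2 hu2m hu2ne (by rw [← hcu2def, ← hmu2def]; exact hmu20)
  have hneg_case : ∀ u, u ∈ U → (Bf n u (conjSL n u)).re < 0 → False := by
    intro u huU hure
    obtain ⟨hxx, hyy, hxy⟩ := xy_gram u (hiso u huU u huU)
    have hxW : u + conjSL n u ∈ W := W.add_mem (hUW huU)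
      (by rw [← hconj]; exact Submodule.mem_map_of_mem (hUW huU))
    refine no_two_neg (real_of_add_conj u) (real_of_negI_sub_conj u) hxy ?_ ?_
    · rw [hxx]
      simp only [Complex.mul_re]
      norm_num
      linarith [hure]
    · rw [hyy]
      simp only [Complex.mul_re]
      norm_num
      linarith [hure]
  by_cases hmu1neg : mu1.re < 0
  · exact hneg_case u1 hu1m (by rw [← hcu1def, ← hmu1def]; exact hmu1neg)
  by_cases hmu2neg : mu2.re < 0
  · exact hneg_case u2 hu2m (by rw [← hcu2def, ← hmu2def]; exact hmu2neg)
  have hmu1pos : 0 < mu1.re := by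
    rcases lt_or_ge 0 mu1.re with h | h
    · exact h
    · exfalso
      have : mu1.re = 0 := le_antisymm h (not_lt.mp hmu1neg)
      exact hmu10 (by rw [hmu1real, this]; simp)
  have hmu2pos : 0 < mu2.re := by
    rcases lt_or_ge 0 mu2.re with h | h
    · exact h
    · exfalso
      have : mu2.re = 0 := le_antisymm h (not_lt.mp hmu2neg)
      exact hmu20 (by rw [hmu2real, this]; simp)
  -- both positive: derive a contradiction with the negative real vector
  set Z : Fin 4 → Cn n := ![u1, u2, cu1, cu2] with hZ
  have li4 : LinearIndependent ℂ Z := by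
    rw [Fintype.linearIndependent_iff]
    intro g hg
    rw [Fin.sum_univ_four] at hg
    simp only [hZ, Matrix.cons_val_zero, Matrix.cons_val_one, Matrix.head_cons,
      Matrix.cons_val_two, Matrix.tail_cons, Matrix.cons_val_three] at hg
    have hzmem : g 0 • u1 + g 1 • u2 ∈ U ⊓ conjSub U := by
      constructor
      · exact Submodule.add_mem _ (U.smul_mem _ hu1m) (U.smul_mem _ hu2m)
      · have : g 0 • u1 + g 1 • u2 = -(g 2 • cu1 + g 3 • cu2) := by
          linear_combination (norm := module) hg
        rw [this]
        exact Submodule.neg_mem _ (Submodule.add_mem _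
          (Submodule.smul_mem _ _ hcu1m) (Submodule.smul_mem _ _ hcu2m))
    rw [hbot, Submodule.mem_bot] at hzmem
    obtain ⟨h0, h1⟩ := hind _ _ hzmem
    have hg2 : g 2 • cu1 + g 3 • cu2 = 0 := by
      rw [h0, h1] at hg
      linear_combination (norm := module) hg
    have hconjrel : starRingEnd ℂ (g 2) • u1 + starRingEnd ℂ (g 3) • u2 = 0 := by
      have := congrArg (conjSL n) hg2
      rw [map_add, map_smulₛₗ, map_smulₛₗ, map_zero, hcu1def, hcu2def,
        conjSL_conjSL, conjSL_conjSL] at this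
      exact this
    obtain ⟨h2, h3⟩ := hind _ _ hconjrel
    intro i
    fin_cases i
    · exact h0
    · exact h1
    · exact star_injective (by simpa using h2)
    · exact star_injective (by simpa using h3)
  have hspanW : Submodule.span ℂ (Set.range Z) = W := by
    apply Submodule.eq_of_le_of_finrank_le
    · rw [Submodule.span_le]
      rintro z ⟨i, rfl⟩
      fin_cases i
      · exact hUW hu1m
      · exact hUW hu2m
      · exact hconjUW hcu1m
      · exact hconjUW hcu2m
    · rw [hdim, finrank_span_eq_card li4]
      simp
  obtain ⟨v0, hv0P, hv0neg⟩ := hneg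
  have hv0W : v0 ∈ W := (mem_realPoints.mp hv0P).1
  have hv0R : v0 ∈ realSub n := (mem_realPoints.mp hv0P).2
  rw [← hspanW] at hv0W
  obtain ⟨cc, hcc⟩ := (Submodule.mem_span_range_iff_exists_fun ℂ).mp hv0W
  rw [Fin.sum_univ_four] at hcc
  simp only [hZ, Matrix.cons_val_zero, Matrix.cons_val_one, Matrix.head_cons,
    Matrix.cons_val_two, Matrix.tail_cons, Matrix.cons_val_three] at hcc
  -- conjugation fixes v0, so the coefficients pair up
  have hconjcomb : starRingEnd ℂ (cc 0) • cu1 + starRingEnd ℂ (cc 1) • cu2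
      + starRingEnd ℂ (cc 2) • u1 + starRingEnd ℂ (cc 3) • u2 = v0 := by
    have := congrArg (conjSL n) hcc
    rw [conjSL_eq_self_of_mem hv0R] at this
    rw [map_add, map_add, map_add, map_smulₛₗ, map_smulₛₗ, map_smulₛₗ, map_smulₛₗ,
      hcu1def, hcu2def, conjSL_conjSL, conjSL_conjSL] at this
    rw [← hcu1def, ← hcu2def] at this
    linear_combination (norm := module) this
  have hpairup : cc 2 = starRingEnd ℂ (cc 0) ∧ cc 3 = starRingEnd ℂ (cc 1) := by
    have hdiff : ∑ i, (![cc 0 - starRingEnd ℂ (cc 2), cc 1 - starRingEnd ℂ (cc 3),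
        cc 2 - starRingEnd ℂ (cc 0), cc 3 - starRingEnd ℂ (cc 1)]) i • Z i = 0 := by
      rw [Fin.sum_univ_four]
      simp only [hZ, Matrix.cons_val_zero, Matrix.cons_val_one, Matrix.head_cons,
        Matrix.cons_val_two, Matrix.tail_cons, Matrix.cons_val_three]
      linear_combination (norm := module) hcc - hconjcomb
    have := Fintype.linearIndependent_iff.mp li4 _ hdiff
    constructor
    · have h := this 2
      simp only [Matrix.cons_val_two, Matrix.tail_cons, Matrix.head_cons] at h
      linear_combination h
    · have h := this 3
      simp only [Matrix.cons_val_three, Matrix.tail_cons, Matrix.head_cons] at h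
      linear_combination h
  -- compute the norm of v0
  have hgramv : Bf n v0 v0 = 2 * (cc 0 * starRingEnd ℂ (cc 0)) * mu1
      + 2 * (cc 1 * starRingEnd ℂ (cc 1)) * mu2 := by
    have hB13 : Bf n u1 cu1 = mu1 := rfl
    have hB24 : Bf n u2 cu2 = mu2 := rfl
    have h11 : Bf n u1 u1 = 0 := hiso u1 hu1m u1 hu1m
    have h12 : Bf n u1 u2 = 0 := hiso u1 hu1m u2 hu2m
    have h21 : Bf n u2 u1 = 0 := hiso u2 hu2m u1 hu1m
    have h22 : Bf n u2 u2 = 0 := hiso u2 hu2m u2 hu2m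
    have hc11 : Bf n cu1 cu1 = 0 := by rw [hcu1def, Bf_conj, h11, map_zero]
    have hc12 : Bf n cu1 cu2 = 0 := by rw [hcu1def, hcu2def, Bf_conj, h12, map_zero]
    have hc21 : Bf n cu2 cu1 = 0 := by rw [hcu1def, hcu2def, Bf_conj, h21, map_zero]
    have hc22 : Bf n cu2 cu2 = 0 := by rw [hcu2def, Bf_conj, h22, map_zero]
    have h14 : Bf n u1 cu2 = 0 := horth'
    have h23 : Bf n u2 cu1 = 0 := horth
    have h31 : Bf n cu1 u1 = mu1 := by rw [Bf_comm]
    have h42 : Bf n cu2 u2 = mu2 := by rw [Bf_comm]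
    have h32 : Bf n cu1 u2 = 0 := by rw [Bf_comm]; exact h23
    have h41 : Bf n cu2 u1 = 0 := by rw [Bf_comm]; exact h14
    rw [← hcc]
    rw [hpairup.1, hpairup.2]
    simp only [Bf_add_left, Bf_add_right, Bf_smul_left, Bf_smul_right,
      h11, h12, h21, h22, hc11, hc12, hc21, hc22, h14, h23, h31, h42, h32, h41,
      hB13, hB24]
    ring
  have hre : (Bf n v0 v0).re = 2 * Complex.normSq (cc 0) * mu1.re
      + 2 * Complex.normSq (cc 1) * mu2.re := by
    rw [hgramv, Complex.mul_conj, Complex.mul_conj, hmu1real, hmu2real]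
    simp [Complex.add_re, Complex.mul_re, Complex.ofReal_re, Complex.ofReal_im]
  have : 0 ≤ (Bf n v0 v0).re := by
    rw [hre]
    have := Complex.normSq_nonneg (cc 0)
    have := Complex.normSq_nonneg (cc 1)
    positivity
  linarith
/-- Let `W ⊆ ℂ^{n+2}` be a 4-dimensional conjugation-stable complex
subspace on which `B` is nondegenerate.  Then `W_ℝ := W ∩ ℝ^{n+1,1}` is 4-dimensional
over `ℝ`, and `(,)` restricted to `W_ℝ` has signature `(3,1)` if and only if every
2-dimensional `B`-isotropic complex subspace `U ⊆ W` satisfies `dim_ℂ (U ∩ Ū) = 1`. -/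
theorem statement0 (n : ℕ) (hn : 2 ≤ n) (W : Submodule ℂ (Cn n))
    (hdim : Module.finrank ℂ W = 4)
    (hconj : conjSub W = W)
    (hnd : ∀ v ∈ W, (∀ w ∈ W, Bf n v w = 0) → v = 0) :
    Module.finrank ℝ (realPoints W) = 4 ∧
      (hasSig31 n (realPoints W) ↔
        ∀ U : Submodule ℂ (Cn n), U ≤ W → Module.finrank ℂ U = 2 →
          (∀ u ∈ U, ∀ v ∈ U, Bf n u v = 0) →
          Module.finrank ℂ ↥(U ⊓ conjSub U) = 1) := by

  obtain ⟨e, heP, hspanR, hspanC, hortho, hdiag⟩ := exists_diag_basis hdim hconj hnd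
  have hrank4 : Module.finrank ℝ (realPoints W) = 4 := by
    rw [finrank_realPoints W hconj, hdim]
  refine ⟨hrank4, ?_, ?_⟩
  · intro hsig U hUW hU2 hiso
    have hneg := neg_of_hasSig31 hsig
    have hle : Module.finrank ℂ ↥(U ⊓ conjSub U) ≤ Module.finrank ℂ ↥U :=
      Submodule.finrank_mono inf_le_left
    by_contra hne
    have hcases : Module.finrank ℂ ↥(U ⊓ conjSub U) = 0
        ∨ Module.finrank ℂ ↥(U ⊓ conjSub U) = 2 := by omega
    rcases hcases with h0 | h2
    · exact no_disjoint_iso hdim hconj hneg hUW hU2 hiso (Submodule.finrank_eq_zero.mp h0)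
    · have hUeq : U ⊓ conjSub U = U := by
        apply Submodule.eq_of_le_of_finrank_le inf_le_left
        rw [hU2, h2]
      have hsub : U ≤ conjSub U := by
        conv_lhs => rw [← hUeq]
        exact inf_le_right
      have hstab : conjSub U = U := by
        apply le_antisymm
        · rintro x ⟨u, hu, rfl⟩
          obtain ⟨w', hw', hw'eq⟩ := hsub hu
          rw [← hw'eq, conjSL_conjSL]
          exact hw'
        · exact hsub
      exact no_conj_stable_iso hU2 hiso hstab
  · intro hrhs
    by_contra hnosig
    have hnoneg : ¬ hasNegVec n W := fun hneg =>
      hnosig (hasSig31_of_neg heP hspanR hortho hdiag hneg)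
    obtain ⟨U, hUW, hU2, hiso, h0⟩ := not_rhs_of_not_neg heP hspanC hortho hdiag hnoneg
    have := hrhs U hUW hU2 hiso
    omega

end
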